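/- Let a : ℕ → [0, ∞) be defined for n ≥ 1 and satisfy the shuffle-type estimate a(k)ⁿ ≤ ((nk)! / (k!)ⁿ) · a(nk) for all integers n, k ≥ 1. Then sup_{k ≥ 1} (k! · a(k))^{1/k} = limsup_{n→∞} (n! · a(n))^{1/n}, as an identity in the extended nonnegative reals [0, ∞]. -/

import Mathlib

open Filter ENNReal

/-- For a nonnegative sequence satisfying the shuffle-type estimate
`a(k)ⁿ ≤ ((nk)!/(k!)ⁿ)·a(nk)`, the supremum over `k ≥ 1` of `(k!·a(k))^{1/k}`
equals the limsup as `n → ∞` of `(n!·a(n))^{1/n}`, in `[0, ∞]`. -/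
theorem stmt_6 (a : ℕ → NNReal)
    (ha : ∀ n k : ℕ, 1 ≤ n → 1 ≤ k →
      (a k : ℝ≥0∞) ^ n ≤
        ((n * k).factorial : ℝ≥0∞) / ((k.factorial : ℝ≥0∞)) ^ n * (a (n * k) : ℝ≥0∞)) :
    (⨆ k : ℕ, ⨆ _ : 1 ≤ k, ((k.factorial : ℝ≥0∞) * (a k : ℝ≥0∞)) ^ (1 / (k : ℝ))) =
      Filter.limsup
        (fun n : ℕ => ((n.factorial : ℝ≥0∞) * (a n : ℝ≥0∞)) ^ (1 / (n : ℝ)))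
        Filter.atTop := by
  set f : ℕ → ℝ≥0∞ := fun n => ((n.factorial : ℝ≥0∞) * (a n : ℝ≥0∞)) ^ (1 / (n : ℝ)) with hfdef
  have key : ∀ n k : ℕ, 1 ≤ n → 1 ≤ k → f k ≤ f (n * k) := by
    intro n k hn hk
    have hfac0 : ((k.factorial : ℝ≥0∞)) ^ n ≠ 0 := by
      simp [pow_eq_zero_iff, Nat.factorial_ne_zero]
    have hfacT : ((k.factorial : ℝ≥0∞)) ^ n ≠ ∞ := by
      simp [ENNReal.pow_ne_top]
    have hc : ((k.factorial : ℝ≥0∞) * a k) ^ n ≤ (((n * k).factorial : ℝ≥0∞)) * a (n * k) := by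
      have h := ha n k hn hk
      calc ((k.factorial : ℝ≥0∞) * a k) ^ n
          = ((k.factorial : ℝ≥0∞)) ^ n * (a k : ℝ≥0∞) ^ n := mul_pow _ _ _
        _ ≤ ((k.factorial : ℝ≥0∞)) ^ n *
              (((n * k).factorial : ℝ≥0∞) / ((k.factorial : ℝ≥0∞)) ^ n * (a (n * k) : ℝ≥0∞)) :=
            by gcongr
        _ = (((n * k).factorial : ℝ≥0∞)) * a (n * k) := by
            rw [← mul_assoc, ENNReal.mul_div_cancel' (fun h => absurd h hfac0) (fun h => absurd h hfacT)]
    have hnk0 : (0:ℝ) < (n:ℝ) * (k:ℝ) := by positivity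
    have hmono := ENNReal.rpow_le_rpow hc (le_of_lt (by positivity : (0:ℝ) < 1 / ((n:ℝ) * (k:ℝ))))
    have hl : (((k.factorial : ℝ≥0∞) * a k) ^ n) ^ (1 / ((n:ℝ) * (k:ℝ))) =
        ((k.factorial : ℝ≥0∞) * a k) ^ (1 / (k : ℝ)) := by
      rw [← ENNReal.rpow_natCast _ n, ← ENNReal.rpow_mul]
      congr 1
      field_simp
    have hn' : (n:ℝ) * (k:ℝ) = ((n * k : ℕ) : ℝ) := by push_cast; ring
    rw [hl, hn'] at hmono
    simpa [hfdef] using hmono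
  apply le_antisymm
  · refine iSup₂_le fun k hk => ?_
    apply Filter.le_limsup_of_frequently_le
    · rw [Filter.frequently_atTop]
      intro N
      refine ⟨(N + 1) * k, ?_, key (N + 1) k (by omega) hk⟩
      calc N ≤ N + 1 := by omega
        _ ≤ (N + 1) * k := Nat.le_mul_of_pos_right _ (by omega)
    · exact ⟨⊤, Filter.Eventually.of_forall fun _ => le_top⟩
  · apply Filter.limsup_le_of_le
    · exact ⟨0, fun _ _ => zero_le⟩
    · filter_upwards [Filter.eventually_ge_atTop 1] with n hn
      exact le_iSup₂ (f := fun k (_ : 1 ≤ k) =>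
        ((k.factorial : ℝ≥0∞) * (a k : ℝ≥0∞)) ^ (1 / (k : ℝ))) n hn
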